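/- Let b : X × Y → ℝ be a norm-one continuous bilinear form with linearization T_b on X ⊗̂_π Y and 0 < ε < 1. Then S(T_b, ε²) ⊆ co̅{x ⊗ y : (x, y) ∈ S(b, ε)} + 4ε B_{X ⊗̂_π Y}, i.e., every u in the unit ball of X ⊗̂_π Y with T_b(u) ≥ 1 − ε² is within distance 4ε of the closed convex hull of elementary tensors x ⊗ y with ‖x‖, ‖y‖ ≤ 1 and b(x, y) ≥ 1 − ε. -/

import Mathlib

open TensorProduct

variable {X Y : Type*} [NormedAddCommGroup X] [NormedSpace ℝ X]
  [NormedAddCommGroup Y] [NormedSpace ℝ Y]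

/-- The projective tensor norm of an element of `X ⊗ Y`: the infimum of
`∑ ‖xᵢ‖‖yᵢ‖` over all finite representations `t = ∑ xᵢ ⊗ yᵢ`. -/
noncomputable def projNorm (t : X ⊗[ℝ] Y) : ℝ :=
  sInf {r | ∃ (n : ℕ) (x : Fin n → X) (y : Fin n → Y),
    t = ∑ i, x i ⊗ₜ[ℝ] y i ∧ r = ∑ i, ‖x i‖ * ‖y i‖}

/-- The linearisation `T_b` on the tensor product of a continuous bilinear form
`b`. -/
noncomputable def Tb (b : X →L[ℝ] Y →L[ℝ] ℝ) : X ⊗[ℝ] Y →ₗ[ℝ] ℝ :=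
  TensorProduct.lift (LinearMap.mk₂ ℝ (fun x y => b x y)
    (by intros; simp) (by intros; simp) (by intros; simp) (by intros; simp))

private lemma repSet_bddBelow (t : X ⊗[ℝ] Y) :
    BddBelow {r | ∃ (n : ℕ) (x : Fin n → X) (y : Fin n → Y),
      t = ∑ i, x i ⊗ₜ[ℝ] y i ∧ r = ∑ i, ‖x i‖ * ‖y i‖} := by
  refine ⟨0, ?_⟩
  rintro r ⟨n, x, y, -, rfl⟩
  exact Finset.sum_nonneg fun i _ => mul_nonneg (norm_nonneg _) (norm_nonneg _)

private lemma projNorm_le_rep {t : X ⊗[ℝ] Y} {n : ℕ} {x : Fin n → X} {y : Fin n → Y}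
    (h : t = ∑ i, x i ⊗ₜ[ℝ] y i) : projNorm t ≤ ∑ i, ‖x i‖ * ‖y i‖ :=
  csInf_le (repSet_bddBelow t) ⟨n, x, y, h, rfl⟩

private lemma exists_rep (t : X ⊗[ℝ] Y) :
    ∃ (n : ℕ) (x : Fin n → X) (y : Fin n → Y), t = ∑ i, x i ⊗ₜ[ℝ] y i := by
  induction t using TensorProduct.induction_on with
  | zero => exact ⟨0, ![], ![], by simp⟩
  | tmul a c => exact ⟨1, ![a], ![c], by simp⟩
  | add s t hs ht =>
    obtain ⟨n, x, y, rfl⟩ := hs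
    obtain ⟨m, x', y', rfl⟩ := ht
    exact ⟨n + m, Fin.append x x', Fin.append y y', by
      rw [Fin.sum_univ_add]
      simp⟩

private lemma Tb_tmul (b : X →L[ℝ] Y →L[ℝ] ℝ) (x : X) (y : Y) :
    Tb b (x ⊗ₜ[ℝ] y) = b x y := by simp [Tb]

set_option maxHeartbeats 1600000 in
/-- for a norm-one bilinear form `b` and `0 < ε < 1`, every `u` in
the unit ball of the projective tensor product with `T_b(u) ≥ 1 - ε²` lies
within distance `4ε` of the closed convex hull of the elementary tensors
`x ⊗ y` with `(x,y) ∈ S(b,ε)`; that is,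
`S(T_b, ε²) ⊆ co̅{x ⊗ y : (x,y) ∈ S(b,ε)} + 4ε B`. -/
theorem slice_subset_closedConvexHull_add_ball
    [CompleteSpace X] [CompleteSpace Y]
    (b : X →L[ℝ] Y →L[ℝ] ℝ) (hb : ‖b‖ = 1) (ε : ℝ) (hε : 0 < ε) (hε1 : ε < 1)
    (u : X ⊗[ℝ] Y) (hu : projNorm u ≤ 1) (hTu : 1 - ε ^ 2 ≤ Tb b u) :
    ∀ δ > (0 : ℝ),
      ∃ w ∈ convexHull ℝ {v : X ⊗[ℝ] Y | ∃ (x : X) (y : Y),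
        ‖x‖ ≤ 1 ∧ ‖y‖ ≤ 1 ∧ 1 - ε ≤ b x y ∧ v = x ⊗ₜ[ℝ] y},
      projNorm (u - w) < 4 * ε + δ := by
  intro δ hδ
  classical
  set m := min δ 1 with hm
  have hm0 : 0 < m := lt_min hδ one_pos
  have hmδ : m ≤ δ := min_le_left _ _
  have hm1 : m ≤ 1 := min_le_right _ _
  have hδ'0 : 0 < ε * m / 8 := by positivity
  -- pick a good representation of u
  obtain ⟨N0, X0, Y0, hN0⟩ := exists_rep u
  have hne : Set.Nonempty {r | ∃ (n : ℕ) (x : Fin n → X) (y : Fin n → Y),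
      u = ∑ i, x i ⊗ₜ[ℝ] y i ∧ r = ∑ i, ‖x i‖ * ‖y i‖} := ⟨_, N0, X0, Y0, hN0, rfl⟩
  have hlt : projNorm u < 1 + ε * m / 8 := lt_of_le_of_lt hu (by linarith)
  obtain ⟨r, hrmem, hrlt⟩ := exists_lt_of_csInf_lt hne hlt
  obtain ⟨n, x, y, hrep, rfl⟩ := hrmem
  set α : Fin n → ℝ := fun i => ‖x i‖ * ‖y i‖ with hαdef
  set β : Fin n → ℝ := fun i => b (x i) (y i) with hβdef
  have hα0 : ∀ i, 0 ≤ α i := fun i => mul_nonneg (norm_nonneg _) (norm_nonneg _)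
  have hβα : ∀ i, |β i| ≤ α i := by
    intro i
    have h := b.le_opNorm₂ (x i) (y i)
    rw [hb, one_mul] at h
    simpa [hβdef, hαdef, Real.norm_eq_abs] using h
  set T := ∑ i, α i with hTdef
  have hT : T < 1 + ε * m / 8 := hrlt
  have hTbu : Tb b u = ∑ i, β i := by
    rw [hrep, map_sum]
    exact Finset.sum_congr rfl fun i _ => Tb_tmul b (x i) (y i)
  have hβT : ∑ i, β i ≤ T :=
    Finset.sum_le_sum fun i _ => (le_abs_self _).trans (hβα i)
  have hT1 : 1 - ε ^ 2 ≤ T := le_trans (hTbu ▸ hTu) hβT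
  set P : Fin n → Prop := fun i => (1 - ε) * α i ≤ β i ∧ α i ≠ 0 with hP
  set A : Finset (Fin n) := Finset.univ.filter P with hA
  set s := ∑ i ∈ A, α i with hs
  have hsplitα := Finset.sum_filter_add_sum_filter_not Finset.univ P α
  have hsplitβ := Finset.sum_filter_add_sum_filter_not Finset.univ P β
  have h1 : ∑ i ∈ A, β i ≤ s :=
    Finset.sum_le_sum fun i _ => (le_abs_self _).trans (hβα i)
  have h2 : ∑ i ∈ Finset.univ.filter (fun i => ¬ P i), β i
      ≤ (1 - ε) * ∑ i ∈ Finset.univ.filter (fun i => ¬ P i), α i := by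
    rw [Finset.mul_sum]
    refine Finset.sum_le_sum fun i hi => ?_
    have hnp : ¬ ((1 - ε) * α i ≤ β i ∧ α i ≠ 0) := by
      have h := (Finset.mem_filter.mp hi).2
      rwa [hP] at h
    rcases eq_or_ne (α i) 0 with h0 | h0
    · have : |β i| ≤ 0 := h0 ▸ hβα i
      have : β i = 0 := abs_nonpos_iff.mp this
      rw [this, h0, mul_zero]
    · have hlt : β i < (1 - ε) * α i := by
        by_contra hge
        exact hnp ⟨not_lt.mp hge, h0⟩
      exact hlt.le
  have key : 1 - ε ^ 2 ≤ s + (1 - ε) * (T - s) := by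
    have hTs' : ∑ i ∈ Finset.univ.filter (fun i => ¬ P i), α i = T - s := by
      rw [hs, hTdef, ← hsplitα]; ring
    have : 1 - ε ^ 2 ≤ ∑ i, β i := hTbu ▸ hTu
    rw [← hsplitβ] at this
    calc 1 - ε ^ 2 ≤ ∑ i ∈ A, β i + ∑ i ∈ Finset.univ.filter (fun i => ¬ P i), β i := this
      _ ≤ s + (1 - ε) * (T - s) := by rw [← hTs']; exact add_le_add h1 h2
  have hsT : s ≤ T := by
    have := Finset.sum_nonneg (fun i (_ : i ∈ Finset.univ.filter (fun i => ¬ P i)) => hα0 i)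
    rw [hs, hTdef, ← hsplitα]; linarith
  have hTs : T - s ≤ ε + m / 8 := by nlinarith [key, hT, hε]
  have hs_lb : 1 - ε ^ 2 - ε - m / 8 ≤ s := by linarith
  rcases le_or_gt ε (1/2) with hhalf | hhalf
  · -- main case
    have hs0 : 0 < s := by nlinarith [hs_lb, hm1, sq_nonneg ε]
    refine ⟨s⁻¹ • ∑ i ∈ A, x i ⊗ₜ[ℝ] y i, ?_, ?_⟩
    · have hcm : A.centerMass α
          (fun i => (‖x i‖⁻¹ • x i) ⊗ₜ[ℝ] (‖y i‖⁻¹ • y i))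
          = s⁻¹ • ∑ i ∈ A, x i ⊗ₜ[ℝ] y i := by
        rw [Finset.centerMass]
        congr 1
        refine Finset.sum_congr rfl fun i hi => ?_
        obtain ⟨-, hβi, hαi⟩ : i ∈ Finset.univ ∧ (1 - ε) * α i ≤ β i ∧ α i ≠ 0 := by
          simpa [hA, hP, Finset.mem_filter] using hi
        have hx : ‖x i‖ ≠ 0 := fun h => hαi (by simp [hαdef, h])
        have hy : ‖y i‖ ≠ 0 := fun h => hαi (by simp [hαdef, h])
        have e : (‖x i‖⁻¹ • x i) ⊗ₜ[ℝ] (‖y i‖⁻¹ • y i)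
            = (‖y i‖⁻¹ * ‖x i‖⁻¹) • (x i ⊗ₜ[ℝ] y i) := by
          rw [tmul_smul, ← smul_tmul', smul_smul]
        rw [e, smul_smul, show α i * (‖y i‖⁻¹ * ‖x i‖⁻¹) = 1 by
          rw [show α i = ‖x i‖ * ‖y i‖ from rfl]; field_simp, one_smul]
      rw [← hcm]
      refine Finset.centerMass_mem_convexHull A (fun i _ => hα0 i) hs0 fun i hi => ?_
      obtain ⟨-, hβi, hαi⟩ : i ∈ Finset.univ ∧ (1 - ε) * α i ≤ β i ∧ α i ≠ 0 := by
        simpa [hA, hP, Finset.mem_filter] using hi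
      have hx : ‖x i‖ ≠ 0 := fun h => hαi (by simp [hαdef, h])
      have hy : ‖y i‖ ≠ 0 := fun h => hαi (by simp [hαdef, h])
      have hαpos : 0 < α i := lt_of_le_of_ne (hα0 i) (Ne.symm hαi)
      refine ⟨‖x i‖⁻¹ • x i, ‖y i‖⁻¹ • y i, ?_, ?_, ?_, rfl⟩
      · rw [norm_smul, norm_inv, norm_norm, inv_mul_cancel₀ hx]
      · rw [norm_smul, norm_inv, norm_norm, inv_mul_cancel₀ hy]
      · have e : b (‖x i‖⁻¹ • x i) (‖y i‖⁻¹ • y i) = β i / α i := by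
          rw [show α i = ‖x i‖ * ‖y i‖ from rfl, show β i = b (x i) (y i) from rfl,
            b.map_smul, ContinuousLinearMap.smul_apply, (b (x i)).map_smul,
            smul_eq_mul, smul_eq_mul, div_eq_mul_inv, mul_inv]
          ring
        rw [e, le_div_iff₀ hαpos]
        linarith
    · -- distance estimate
      have hwrep : u - s⁻¹ • ∑ i ∈ A, x i ⊗ₜ[ℝ] y i
          = ∑ i, (if P i then (1 - s⁻¹) • x i else x i) ⊗ₜ[ℝ] y i := by
        rw [hrep, ← Finset.sum_filter_add_sum_filter_not Finset.univ P
          (fun i => (if P i then (1 - s⁻¹) • x i else x i) ⊗ₜ[ℝ] y i),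
          ← Finset.sum_filter_add_sum_filter_not Finset.univ P
          (fun i => x i ⊗ₜ[ℝ] y i)]
        rw [Finset.smul_sum]
        have e1 : ∑ i ∈ Finset.univ.filter P,
            (if P i then (1 - s⁻¹) • x i else x i) ⊗ₜ[ℝ] y i
            = ∑ i ∈ A, (x i ⊗ₜ[ℝ] y i - s⁻¹ • (x i ⊗ₜ[ℝ] y i)) := by
          refine Finset.sum_congr rfl fun i hi => ?_
          have hPi : P i := (Finset.mem_filter.mp hi).2
          rw [if_pos hPi, ← smul_tmul', sub_smul, one_smul]
        have e2 : ∑ i ∈ Finset.univ.filter (fun i => ¬ P i),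
            (if P i then (1 - s⁻¹) • x i else x i) ⊗ₜ[ℝ] y i
            = ∑ i ∈ Finset.univ.filter (fun i => ¬ P i), x i ⊗ₜ[ℝ] y i := by
          refine Finset.sum_congr rfl fun i hi => ?_
          rw [if_neg (Finset.mem_filter.mp hi).2]
        rw [e1, e2, Finset.sum_sub_distrib]
        abel
      have hle := projNorm_le_rep hwrep
      have hval : ∑ i, ‖if P i then (1 - s⁻¹) • x i else x i‖ * ‖y i‖
          = |1 - s⁻¹| * s + (T - s) := by
        rw [← Finset.sum_filter_add_sum_filter_not Finset.univ P
          (fun i => ‖if P i then (1 - s⁻¹) • x i else x i‖ * ‖y i‖)]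
        have e1 : ∑ i ∈ Finset.univ.filter P,
            ‖if P i then (1 - s⁻¹) • x i else x i‖ * ‖y i‖ = |1 - s⁻¹| * s := by
          rw [hs, Finset.mul_sum]
          refine Finset.sum_congr rfl fun i hi => ?_
          rw [if_pos (Finset.mem_filter.mp hi).2, norm_smul, Real.norm_eq_abs, hαdef]
          ring
        have e2 : ∑ i ∈ Finset.univ.filter (fun i => ¬ P i),
            ‖if P i then (1 - s⁻¹) • x i else x i‖ * ‖y i‖ = T - s := by
          rw [show T - s = ∑ i ∈ Finset.univ.filter (fun i => ¬ P i), α i by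
            rw [hs, hTdef, ← hsplitα]; ring]
          refine Finset.sum_congr rfl fun i hi => ?_
          rw [if_neg (Finset.mem_filter.mp hi).2, hαdef]
        rw [e1, e2]
      rw [hval] at hle
      have habs : |1 - s⁻¹| * s = |s - 1| := by
        have e0 : |1 - s⁻¹| * s = |1 - s⁻¹| * |s| := by rw [abs_of_pos hs0]
        rw [e0, ← abs_mul, sub_mul, one_mul, inv_mul_cancel₀ (ne_of_gt hs0), abs_sub_comm]
      rw [habs] at hle
      have hsq : ε ^ 2 ≤ ε / 2 := by nlinarith
      have habs2 : |s - 1| ≤ ε ^ 2 + ε + m / 8 := by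
        rw [abs_le]
        constructor
        · linarith
        · nlinarith [hT, hε, hm0, hm1]
      calc projNorm (u - s⁻¹ • ∑ i ∈ A, x i ⊗ₜ[ℝ] y i) ≤ |s - 1| + (T - s) := hle
        _ < 4 * ε + δ := by linarith
  · -- easy case: ε > 1/2
    have h1' : (1 : ℝ) - ε < ‖b‖ := by rw [hb]; linarith
    obtain ⟨x₀, hx₀n, hx₀⟩ := b.exists_lt_apply_of_lt_opNorm h1'
    obtain ⟨y₀, hy₀n, hy₀⟩ := (b x₀).exists_lt_apply_of_lt_opNorm hx₀
    obtain ⟨x₁, y₁, hx₁, hy₁, hb₁⟩ :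
        ∃ (x₁ : X) (y₁ : Y), ‖x₁‖ ≤ 1 ∧ ‖y₁‖ ≤ 1 ∧ 1 - ε ≤ b x₁ y₁ := by
      rcases le_or_gt 0 (b x₀ y₀) with h | h
      · refine ⟨x₀, y₀, hx₀n.le, hy₀n.le, ?_⟩
        rw [Real.norm_eq_abs, abs_of_nonneg h] at hy₀
        linarith
      · refine ⟨-x₀, y₀, by simpa using hx₀n.le, hy₀n.le, ?_⟩
        rw [Real.norm_eq_abs, abs_of_neg h] at hy₀
        simp only [map_neg, ContinuousLinearMap.neg_apply]
        linarith
    refine ⟨x₁ ⊗ₜ[ℝ] y₁, subset_convexHull ℝ _ ⟨x₁, y₁, hx₁, hy₁, hb₁, rfl⟩, ?_⟩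
    have hwrep : u - x₁ ⊗ₜ[ℝ] y₁
        = ∑ i : Fin (n + 1), ((Fin.cons (-x₁) x : Fin (n+1) → X) i) ⊗ₜ[ℝ] ((Fin.cons y₁ y : Fin (n+1) → Y) i) := by
      rw [Fin.sum_univ_succ]
      simp only [Fin.cons_zero, Fin.cons_succ]
      rw [hrep, neg_tmul]
      abel
    have hle := projNorm_le_rep hwrep
    have hval : ∑ i : Fin (n + 1), ‖(Fin.cons (-x₁) x : Fin (n+1) → X) i‖ * ‖(Fin.cons y₁ y : Fin (n+1) → Y) i‖
        = ‖x₁‖ * ‖y₁‖ + T := by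
      rw [Fin.sum_univ_succ]
      simp [hTdef, hαdef]
    rw [hval] at hle
    have hb1 : ‖x₁‖ * ‖y₁‖ ≤ 1 := by
      calc ‖x₁‖ * ‖y₁‖ ≤ 1 * 1 := mul_le_mul hx₁ hy₁ (norm_nonneg _) zero_le_one
        _ = 1 := one_mul 1
    calc projNorm (u - x₁ ⊗ₜ[ℝ] y₁) ≤ ‖x₁‖ * ‖y₁‖ + T := hle
      _ < 4 * ε + δ := by nlinarith [hT, hε, hm0, hmδ, hm1]
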